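/- For fixed s > 0 and r ≥ 0, the function t ↦ ζ_s(t, r) = (1/s²)( rs·asinh(rs/t) − √(t² + r²s²) + t ) is nonincreasing in t on (0, ∞). -/

import Mathlib

noncomputable def zeta (s t r : ℝ) : ℝ :=
  (1 / s ^ 2) * (r * s * Real.arsinh (r * s / t) - Real.sqrt (t ^ 2 + r ^ 2 * s ^ 2) + t)

lemma zeta_hasDerivAt (s r : ℝ) (hs : 0 < s) (hr : 0 ≤ r) {t : ℝ} (ht : 0 < t) :
    HasDerivAt (fun t => zeta s t r)
      ((1 / s ^ 2) * (1 - Real.sqrt (t ^ 2 + r ^ 2 * s ^ 2) / t)) t := by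
  have hpos : 0 < t ^ 2 + r ^ 2 * s ^ 2 := by positivity
  set u := Real.sqrt (t ^ 2 + r ^ 2 * s ^ 2) with hu
  have hu0 : 0 < u := Real.sqrt_pos.mpr hpos
  have husq : u * u = t ^ 2 + r ^ 2 * s ^ 2 := Real.mul_self_sqrt hpos.le
  have h1 : HasDerivAt (fun t : ℝ => r * s / t) (r * s * -(t ^ 2)⁻¹) t := by
    simpa [div_eq_mul_inv] using (hasDerivAt_inv ht.ne').const_mul (r * s)
  have h2 : HasDerivAt (fun t : ℝ => Real.arsinh (r * s / t))
      ((Real.sqrt (1 + (r * s / t) ^ 2))⁻¹ * (r * s * -(t ^ 2)⁻¹)) t :=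
    (Real.hasDerivAt_arsinh _).comp t h1
  have h3 : HasDerivAt (fun t : ℝ => t ^ 2 + r ^ 2 * s ^ 2) (2 * t) t := by
    simpa using (hasDerivAt_pow 2 t).add_const (r ^ 2 * s ^ 2)
  have h4 : HasDerivAt (fun t : ℝ => Real.sqrt (t ^ 2 + r ^ 2 * s ^ 2))
      (2 * t / (2 * u)) t := h3.sqrt hpos.ne'
  have h5 := (((h2.const_mul (r * s)).sub h4).add (hasDerivAt_id t)).const_mul (1 / s ^ 2)
  have hrt : Real.sqrt (1 + (r * s / t) ^ 2) = u / t := by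
    rw [show 1 + (r * s / t) ^ 2 = (t ^ 2 + r ^ 2 * s ^ 2) / t ^ 2 by field_simp,
      Real.sqrt_div hpos.le, Real.sqrt_sq ht.le]
  refine h5.congr_deriv (Eq.symm ?_)
  rw [hrt]
  field_simp
  linear_combination (-1) * husq

theorem zeta_antitone_in_t (s r : ℝ) (hs : 0 < s) (hr : 0 ≤ r) :
    AntitoneOn (fun t => zeta s t r) (Set.Ioi 0) := by
  have key : ∀ t ∈ interior (Set.Ioi (0:ℝ)), HasDerivAt (fun t => zeta s t r)
      ((1 / s ^ 2) * (1 - Real.sqrt (t ^ 2 + r ^ 2 * s ^ 2) / t)) t := by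
    intro t ht
    rw [interior_Ioi] at ht
    exact zeta_hasDerivAt s r hs hr ht
  apply antitoneOn_of_deriv_nonpos (convex_Ioi 0)
  · intro t ht
    exact ((key t (by rwa [interior_Ioi])).continuousAt).continuousWithinAt
  · intro t ht
    exact (key t ht).differentiableAt.differentiableWithinAt
  · intro t ht
    rw [(key t ht).deriv]
    rw [interior_Ioi] at ht
    have hle : t ≤ Real.sqrt (t ^ 2 + r ^ 2 * s ^ 2) := by
      nlinarith [Real.sq_sqrt (show (0:ℝ) ≤ t ^ 2 + r ^ 2 * s ^ 2 by positivity),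
        Real.sqrt_nonneg (t ^ 2 + r ^ 2 * s ^ 2)]
    have h1 : (0:ℝ) ≤ 1 / s ^ 2 := by positivity
    have h2 : 1 ≤ Real.sqrt (t ^ 2 + r ^ 2 * s ^ 2) / t := (one_le_div ht).mpr hle
    exact mul_nonpos_of_nonneg_of_nonpos h1 (by linarith)
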